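/- For all integers n ≥ k ≥ 0, the (q,r)-Whitney numbers of the second kind satisfy the vertical recurrence relation W_{m,r}[n+1,k+1]_q = q^{mk+r} · Σ_{j=k}^{n} ([m(k+1)+r]_q)^{n−j} · W_{m,r}[j,k]_q. -/

import Mathlib

open Finset

/-- The `q`-integer `[s]_q = (q^s - 1)/(q - 1)` for an integer `s`. -/
noncomputable def qint (q : ℝ) (s : ℤ) : ℝ := (q ^ s - 1) / (q - 1)

/-- The `(q,r)`-Whitney numbers of the second kind `W_{m,r}[n,k]_q`, with `r : ℤ` so
that both `W_{m,r}` and `W_{m,-r}` are covered: `W[0,0] = 1`, `W[n,k] = 0` for `k > n`,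
and `W[n,k] = q^(m(k-1)+r) W[n-1,k-1] + [mk+r]_q W[n-1,k]`. -/
noncomputable def qWhitney2 (q : ℝ) (m : ℕ) (r : ℤ) : ℕ → ℕ → ℝ
  | 0, 0 => 1
  | 0, _ + 1 => 0
  | n + 1, 0 => qint q r * qWhitney2 q m r n 0
  | n + 1, k + 1 =>
      q ^ (m * k + r) * qWhitney2 q m r n k
        + qint q (m * (k + 1) + r) * qWhitney2 q m r n (k + 1)

lemma qWhitney2_eq_zero (q : ℝ) (m : ℕ) (r : ℤ) :
    ∀ n k, n < k → qWhitney2 q m r n k = 0 := by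
  intro n
  induction n with
  | zero => intro k hk; match k, hk with
    | k + 1, _ => rfl
  | succ n ih =>
    intro k hk
    match k, hk with
    | k + 1, hk =>
      rw [qWhitney2, ih k (by omega), ih (k+1) (by omega)]
      ring

theorem qWhitney2_vertical_recurrence (q : ℝ) (hq : 0 < q) (hq1 : q ≠ 1) (m r : ℕ) (hm : 0 < m) (hr : 0 < r)
    (n k : ℕ) (hkn : k ≤ n) :
    qWhitney2 q m (r : ℤ) (n + 1) (k + 1) =
      q ^ (m * k + r) *
        ∑ j ∈ Finset.Icc k n,
          qint q (m * (k + 1) + r) ^ (n - j) * qWhitney2 q m (r : ℤ) j k := by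
  have hpow : q ^ ((m : ℤ) * k + r) = q ^ (m * k + r : ℕ) := by
    rw [← zpow_natCast q (m * k + r)]; push_cast; ring_nf
  induction n, hkn using Nat.le_induction with
  | base =>
    rw [qWhitney2, qWhitney2_eq_zero q m r k (k+1) (by omega)]
    rw [mul_zero, add_zero, Finset.Icc_self, Finset.sum_singleton, Nat.sub_self,
      pow_zero, one_mul, hpow]
  | succ n hkn ih =>
    set c := qint q ((m : ℤ) * (k + 1) + r) with hc
    have hsum : ∑ j ∈ Finset.Icc k (n+1), c ^ (n + 1 - j) * qWhitney2 q m (r : ℤ) j k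
        = c * ∑ j ∈ Finset.Icc k n, c ^ (n - j) * qWhitney2 q m (r : ℤ) j k
          + qWhitney2 q m (r : ℤ) (n+1) k := by
      rw [Finset.sum_Icc_succ_top (by omega : k ≤ n + 1), Nat.sub_self, pow_zero,
        one_mul, Finset.mul_sum]
      congr 1
      refine Finset.sum_congr rfl fun j hj => ?_
      have hjn : j ≤ n := (Finset.mem_Icc.mp hj).2
      rw [show n + 1 - j = (n - j) + 1 by omega, pow_succ]
      ring
    rw [qWhitney2, ih]
    push_cast
    push_cast at hsum hc
    rw [← hc, hsum, hpow]
    ring
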